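/- Let k ≥ 1 be an integer and set l = k+4. Then the set R^{k+4}_k has exactly 2(k+4)(k+3) elements (it is a root system of type D_{k+4}). -/

import Mathlib

/-- The symmetric bilinear form on `ℤ^{l+1}` with `B(e₀,e₀) = k`, `B(eᵢ,eᵢ) = -1` for
`1 ≤ i ≤ l`, and `B(eᵢ,eⱼ) = 0` for `i ≠ j`. -/
def bformZ (k l : ℕ) (v w : Fin (l + 1) → ℤ) : ℤ :=
  ((k : ℤ) + 1) * (v 0 * w 0) - ∑ i, v i * w i

/-- The vector `ω' = -(k+2)·e₀ + k·(e₁ + ⋯ + e_l)`. -/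
def omegaZ (k l : ℕ) : Fin (l + 1) → ℤ :=
  fun i => if i = 0 then -((k : ℤ) + 2) else (k : ℤ)

/-- The root system `R^l_k = {v ∈ ℤ^{l+1} : B(v,v) = -2, B(v,ω') = 0}`. -/
def rootSet (k l : ℕ) : Set (Fin (l + 1) → ℤ) :=
  {v | bformZ k l v v = -2 ∧ bformZ k l v (omegaZ k l) = 0}

open Finset

lemma sum_split {n : ℕ} (i j : Fin n) (h : i ≠ j) (f : Fin n → ℤ) (a b c : ℤ)
    (hi : f i = a) (hj : f j = b) (ho : ∀ m, m ≠ i → m ≠ j → f m = c) :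
    ∑ m, f m = a + b + ((n : ℤ) - 2) * c := by
  classical
  have h2 : 2 ≤ n := by
    have := i.isLt; have := j.isLt
    have : (i : ℕ) ≠ (j : ℕ) := fun hc => h (Fin.ext hc)
    omega
  have hsub : ({i, j} : Finset (Fin n)) ⊆ univ := subset_univ _
  have hsplit := Finset.sum_sdiff (f := f) hsub
  have h1 : ∑ m ∈ ({i, j} : Finset (Fin n)), f m = a + b := by
    rw [Finset.sum_pair h, hi, hj]
  have h3 : ∑ m ∈ univ \ ({i, j} : Finset (Fin n)), f m = ((n : ℤ) - 2) * c := by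
    rw [Finset.sum_congr rfl (fun m hm => by
      simp only [mem_sdiff, mem_insert, mem_singleton] at hm
      exact ho m (fun hc => hm.2 (Or.inl hc)) (fun hc => hm.2 (Or.inr hc)))]
    rw [Finset.sum_const, Finset.card_sdiff_of_subset hsub, Finset.card_pair h, card_univ,
      Fintype.card_fin, nsmul_eq_mul]
    push_cast [h2]
    ring
  omega

lemma sq_sum_two {n : ℕ} (b : Fin n → ℤ) (hb : ∑ m, b m ^ 2 = 2) :
    ∃ i j, i ≠ j ∧ (b i = 1 ∨ b i = -1) ∧ (b j = 1 ∨ b j = -1) ∧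
      ∀ m, m ≠ i → m ≠ j → b m = 0 := by
  classical
  have hle : ∀ m, b m ^ 2 ≤ 2 := by
    intro m
    calc b m ^ 2 ≤ ∑ m, b m ^ 2 :=
          Finset.single_le_sum (fun i _ => sq_nonneg (b i)) (mem_univ m)
      _ = 2 := hb
  have hval : ∀ m, b m ≠ 0 → (b m = 1 ∨ b m = -1) := by
    intro m hm
    have := hle m
    rcases lt_trichotomy (b m) 0 with h | h | h
    · right; nlinarith
    · exact absurd h hm
    · left; nlinarith
  set s := univ.filter (fun m => b m ≠ 0) with hs
  have hsum : ∑ m ∈ s, b m ^ 2 = 2 := by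
    rw [← hb]
    apply Finset.sum_subset (filter_subset _ _)
    intro x _ hx
    simp only [hs, mem_filter, mem_univ, true_and, not_not] at hx
    simp [hx]
  have hone : ∀ m ∈ s, b m ^ 2 = 1 := by
    intro m hm
    simp only [hs, mem_filter] at hm
    rcases hval m hm.2 with h | h <;> simp [h]
  have hcard : s.card = 2 := by
    have : ∑ m ∈ s, b m ^ 2 = (s.card : ℤ) := by
      rw [Finset.sum_congr rfl hone]; simp
    rw [this] at hsum
    exact_mod_cast hsum
  obtain ⟨i, j, hij, hsij⟩ := Finset.card_eq_two.mp hcard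
  refine ⟨i, j, hij, ?_, ?_, ?_⟩
  · exact hval i (by have : i ∈ s := by rw [hsij]; simp
                     simpa [hs] using this)
  · exact hval j (by have : j ∈ s := by rw [hsij]; simp
                     simpa [hs] using this)
  · intro m hmi hmj
    by_contra hne
    have : m ∈ s := by simp [hs, hne]
    rw [hsij] at this
    simp only [mem_insert, mem_singleton] at this
    tauto

lemma mem_rootSet_iff (k : ℕ) (hk : 1 ≤ k) (v : Fin (k + 4 + 1) → ℤ) :
    v ∈ rootSet k (k + 4) ↔
      (∑ m : Fin (k + 4), (v m.succ + v 0) ^ 2 = 2 ∧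
       ∑ m : Fin (k + 4), (v m.succ + v 0) = 2 * v 0) := by
  have homega0 : omegaZ k (k + 4) 0 = -((k : ℤ) + 2) := by simp [omegaZ]
  have hsum1 : ∑ i : Fin (k + 4 + 1), v i * v i
      = v 0 * v 0 + ∑ m : Fin (k + 4), v m.succ * v m.succ := Fin.sum_univ_succ _
  have hsum2 : ∑ i : Fin (k + 4 + 1), v i * omegaZ k (k + 4) i
      = v 0 * (-((k : ℤ) + 2)) + (∑ m : Fin (k + 4), v m.succ) * (k : ℤ) := by
    rw [Fin.sum_univ_succ]
    simp only [omegaZ, Fin.succ_ne_zero, if_neg, if_pos, reduceIte]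
    rw [← Finset.sum_mul]
  set t := v 0 with ht
  set S1 := ∑ m : Fin (k + 4), v m.succ with hS1
  set S2 := ∑ m : Fin (k + 4), v m.succ * v m.succ with hS2
  have hexp1 : ∑ m : Fin (k + 4), (v m.succ + t) ^ 2
      = S2 + 2 * t * S1 + ((k : ℤ) + 4) * t ^ 2 := by
    have e : ∀ m : Fin (k + 4), (v m.succ + t) ^ 2
        = v m.succ * v m.succ + 2 * t * v m.succ + t ^ 2 := fun m => by ring
    simp_rw [e]
    rw [Finset.sum_add_distrib, Finset.sum_add_distrib, Finset.sum_const,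
      ← Finset.mul_sum, ← hS1, ← hS2, card_univ, Fintype.card_fin, nsmul_eq_mul]
    push_cast; ring
  have hexp2 : ∑ m : Fin (k + 4), (v m.succ + t)
      = S1 + ((k : ℤ) + 4) * t := by
    rw [Finset.sum_add_distrib, Finset.sum_const, ← hS1, card_univ, Fintype.card_fin,
      nsmul_eq_mul]
    push_cast; ring
  have hk0 : (k : ℤ) ≠ 0 := by positivity
  constructor
  · rintro ⟨h1, h2⟩
    rw [bformZ, hsum1, ← ht] at h1
    rw [bformZ, hsum2, ← ht, homega0] at h2
    have h2' : (k : ℤ) * (S1 + ((k : ℤ) + 2) * t) = 0 := by linear_combination -h2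
    have hS1val : S1 = -((k : ℤ) + 2) * t := by
      rcases mul_eq_zero.mp h2' with h | h
      · exact absurd h hk0
      · linarith
    rw [hexp1, hexp2]
    constructor
    · linear_combination -h1 + 2 * t * hS1val
    · linear_combination hS1val
  · rintro ⟨h1, h2⟩
    rw [hexp1] at h1
    rw [hexp2] at h2
    have hS1val : S1 = -((k : ℤ) + 2) * t := by linarith
    have hS2val : S2 = (k : ℤ) * t ^ 2 + 2 := by linear_combination h1 - 2 * t * hS1val
    constructor
    · rw [bformZ, hsum1, ← ht]
      linear_combination -hS2val
    · rw [bformZ, hsum2, ← ht, homega0]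
      linear_combination -(k : ℤ) * hS1val

def rt (n : ℕ) (s : Bool) (i j : Fin n) : Fin (n + 1) → ℤ :=
  if s then Fin.cons 0 (fun m => if m = i then 1 else if m = j then -1 else 0)
  else Fin.cons (if i < j then 1 else -1)
    (fun m => if m = i ∨ m = j then 0 else -(if i < j then (1 : ℤ) else -1))

lemma rt_zero (n : ℕ) (s : Bool) (i j : Fin n) :
    rt n s i j 0 = if s then 0 else (if i < j then 1 else -1) := by
  cases s <;> simp [rt]

lemma rt_succ (n : ℕ) (s : Bool) (i j : Fin n) (m : Fin n) :
    rt n s i j m.succ = if s then (if m = i then 1 else if m = j then -1 else 0)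
      else (if m = i ∨ m = j then 0 else -(if i < j then (1 : ℤ) else -1)) := by
  cases s <;> simp [rt]

lemma rt_cond (n : ℕ) (s : Bool) (i j : Fin n) (hij : i ≠ j) :
    (∑ m : Fin n, (rt n s i j m.succ + rt n s i j 0) ^ 2 = 2 ∧
     ∑ m : Fin n, (rt n s i j m.succ + rt n s i j 0) = 2 * rt n s i j 0) := by
  cases s with
  | true =>
    have h0 : rt n true i j 0 = 0 := by simp [rt_zero]
    constructor
    · rw [sum_split i j hij _ 1 1 0
        (by simp [rt_succ, h0]) (by simp [rt_succ, h0, hij.symm])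
        (fun m hmi hmj => by simp [rt_succ, h0, hmi, hmj])]
      ring
    · rw [sum_split i j hij _ 1 (-1) 0
        (by simp [rt_succ, h0]) (by simp [rt_succ, h0, hij.symm])
        (fun m hmi hmj => by simp [rt_succ, h0, hmi, hmj])]
      rw [h0]; ring
  | false =>
    set σ : ℤ := if i < j then 1 else -1 with hσ
    have h0 : rt n false i j 0 = σ := by simp [rt_zero, hσ]
    constructor
    · rw [sum_split i j hij _ 1 1 0
        (by simp [rt_succ, h0, hσ]) (by simp [rt_succ, h0, hσ])
        (fun m hmi hmj => by simp [rt_succ, h0, hmi, hmj, hσ])]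
      ring
    · rw [sum_split i j hij _ σ σ 0
        (by simp [rt_succ, h0]) (by simp [rt_succ, h0])
        (fun m hmi hmj => by simp [rt_succ, h0, hmi, hmj, hσ])]
      rw [h0]; ring

lemma eq_rt_true {n : ℕ} (v : Fin (n + 1) → ℤ) (i j : Fin n) (hij : i ≠ j)
    (h0 : v 0 = 0) (hi : v i.succ = 1) (hj : v j.succ = -1)
    (ho : ∀ m, m ≠ i → m ≠ j → v m.succ = 0) : v = rt n true i j := by
  funext x
  refine Fin.cases ?_ ?_ x
  · rw [rt_zero]; simpa using h0
  · intro m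
    rw [rt_succ]
    by_cases hmi : m = i
    · subst hmi; simpa using hi
    · by_cases hmj : m = j
      · subst hmj; simpa [hmi] using hj
      · simpa [hmi, hmj] using ho m hmi hmj

lemma eq_rt_false {n : ℕ} (v : Fin (n + 1) → ℤ) (i j : Fin n)
    (h0 : v 0 = if i < j then 1 else -1)
    (hz : ∀ m, m = i ∨ m = j → v m.succ = 0)
    (ho : ∀ m, m ≠ i → m ≠ j → v m.succ = -(if i < j then (1 : ℤ) else -1)) :
    v = rt n false i j := by
  funext x
  refine Fin.cases ?_ ?_ x
  · rw [rt_zero]; simpa using h0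
  · intro m
    rw [rt_succ]
    by_cases hm : m = i ∨ m = j
    · simpa [hm] using hz m hm
    · push_neg at hm
      simpa [hm.1, hm.2] using ho m hm.1 hm.2

lemma exists_param {n : ℕ} (v : Fin (n + 1) → ℤ)
    (h1 : ∑ m : Fin n, (v m.succ + v 0) ^ 2 = 2)
    (h2 : ∑ m : Fin n, (v m.succ + v 0) = 2 * v 0) :
    ∃ s i j, i ≠ j ∧ v = rt n s i j := by
  obtain ⟨i, j, hij, hbi, hbj, hbo⟩ := sq_sum_two (fun m => v m.succ + v 0) h1
  have hsum : (v i.succ + v 0) + (v j.succ + v 0) = 2 * v 0 := by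
    have := sum_split i j hij (fun m => v m.succ + v 0) (v i.succ + v 0)
      (v j.succ + v 0) 0 rfl rfl hbo
    rw [h2] at this
    linarith
  have ho0 : ∀ m, m ≠ i → m ≠ j → v m.succ = -v 0 := by
    intro m hmi hmj
    have := hbo m hmi hmj
    linarith
  rcases hbi with hbi | hbi <;> rcases hbj with hbj | hbj
  · -- b i = 1, b j = 1 : v 0 = 1
    have h0 : v 0 = 1 := by linarith
    rcases hij.lt_or_gt with hlt | hlt
    · refine ⟨false, i, j, hij, eq_rt_false v i j ?_ ?_ ?_⟩
      · simp [hlt, h0]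
      · rintro m (rfl | rfl) <;> linarith
      · intro m hmi hmj; simp [hlt, ho0 m hmi hmj, h0]
    · refine ⟨false, j, i, hij.symm, eq_rt_false v j i ?_ ?_ ?_⟩
      · simp [hlt, h0]
      · rintro m (rfl | rfl) <;> linarith
      · intro m hmj hmi; simp [hlt, ho0 m hmi hmj, h0]
  · -- b i = 1, b j = -1 : v 0 = 0
    have h0 : v 0 = 0 := by linarith
    exact ⟨true, i, j, hij, eq_rt_true v i j hij h0 (by linarith) (by linarith)
      (fun m hmi hmj => by have := ho0 m hmi hmj; linarith)⟩
  · -- b i = -1, b j = 1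
    have h0 : v 0 = 0 := by linarith
    exact ⟨true, j, i, hij.symm, eq_rt_true v j i hij.symm h0 (by linarith) (by linarith)
      (fun m hmj hmi => by have := ho0 m hmi hmj; linarith)⟩
  · -- b i = -1, b j = -1 : v 0 = -1
    have h0 : v 0 = -1 := by linarith
    rcases hij.lt_or_gt with hlt | hlt
    · refine ⟨false, j, i, hij.symm, eq_rt_false v j i ?_ ?_ ?_⟩
      · simp [not_lt_of_gt hlt, h0, hlt.not_gt]
      · rintro m (rfl | rfl) <;> linarith
      · intro m hmj hmi; simp [hlt.not_gt, ho0 m hmi hmj, h0]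
    · refine ⟨false, i, j, hij, eq_rt_false v i j ?_ ?_ ?_⟩
      · simp [hlt.not_gt, h0]
      · rintro m (rfl | rfl) <;> linarith
      · intro m hmi hmj; simp [hlt.not_gt, ho0 m hmi hmj, h0]

lemma rt_inj {n : ℕ} {s s' : Bool} {i j i' j' : Fin n} (hij : i ≠ j) (hij' : i' ≠ j')
    (h : rt n s i j = rt n s' i' j') : s = s' ∧ i = i' ∧ j = j' := by
  have h0 := congrFun h 0
  rw [rt_zero, rt_zero] at h0
  have hsucc : ∀ m : Fin n, rt n s i j m.succ = rt n s' i' j' m.succ :=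
    fun m => congrFun h m.succ
  have hss : s = s' := by
    cases s <;> cases s' <;>
      first
        | rfl
        | (exfalso; simp only [Bool.false_eq_true, if_false, if_true] at h0;
           split_ifs at h0 <;> norm_num at h0)
  subst hss
  cases s with
  | true =>
    refine ⟨rfl, ?_, ?_⟩
    · have e := hsucc i
      rw [rt_succ, rt_succ] at e
      simp only [if_pos rfl, if_true] at e
      by_contra hne
      rw [if_neg hne] at e
      split_ifs at e <;> norm_num at e
    · have e := hsucc j
      rw [rt_succ, rt_succ] at e
      simp only [if_neg hij.symm, if_pos rfl, if_true] at e
      by_contra hne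
      rw [if_neg hne] at e
      split_ifs at e <;> norm_num at e
  | false =>
    have hσ : (if i < j then (1 : ℤ) else -1) ≠ 0 := by split_ifs <;> norm_num
    have hσ' : (if i' < j' then (1 : ℤ) else -1) ≠ 0 := by split_ifs <;> norm_num
    have hmem : ∀ m : Fin n, (m = i ∨ m = j) ↔ (m = i' ∨ m = j') := by
      intro m
      have e := hsucc m
      rw [rt_succ, rt_succ] at e
      simp only [if_false, Bool.false_eq_true] at e
      constructor
      · intro hm
        rw [if_pos hm] at e
        by_contra hm'
        rw [if_neg hm'] at e
        exact hσ' (by linarith)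
      · intro hm
        rw [if_pos hm] at e
        by_contra hm'
        rw [if_neg hm'] at e
        exact hσ (by linarith)
  -- h0 : σ = σ'
    have hiv := (hmem i).mp (Or.inl rfl)
    have hjv := (hmem j).mp (Or.inr rfl)
    have hiv' := (hmem i').mpr (Or.inl rfl)
    have hjv' := (hmem j').mpr (Or.inr rfl)
    have h0' : (if i < j then (1 : ℤ) else -1) = (if i' < j' then 1 else -1) := by
      simpa using h0
    rcases hiv with rfl | hii
    · refine ⟨rfl, rfl, ?_⟩
      rcases hjv with h | h
      · exact absurd h hij.symm
      · exact h
    · -- i = j'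
      rcases hjv with hji | hjj
      · -- j = i' : swapped
        exfalso
        rw [← hii, ← hji] at h0'
        rcases lt_trichotomy i j with hlt | heq | hlt
        · rw [if_pos hlt, if_neg (not_lt_of_gt hlt)] at h0'; norm_num at h0'
        · exact hij heq
        · rw [if_neg (not_lt_of_gt hlt), if_pos hlt] at h0'; norm_num at h0'
      · -- j = j' and i = j' : contradiction with hij
        exfalso
        exact hij (hii.trans hjj.symm)

/-- For `l = k+4`, the root system `R^{k+4}_k` (of type `D_{k+4}`) has exactly
`2(k+4)(k+3)` elements. -/
theorem rootSet_card_k_plus_four (k : ℕ) (hk : 1 ≤ k) :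
    (rootSet k (k + 4)).ncard = 2 * (k + 4) * (k + 3) := by
  classical
  have hset : rootSet k (k + 4)
      = ↑(((univ : Finset Bool) ×ˢ (univ : Finset (Fin (k + 4))).offDiag).image
        (fun p : Bool × Fin (k + 4) × Fin (k + 4) => rt (k + 4) p.1 p.2.1 p.2.2)) := by
    ext v
    simp only [Finset.coe_image, Set.mem_image, Finset.mem_coe, Finset.mem_product,
      Finset.mem_offDiag, Finset.mem_univ, true_and]
    constructor
    · intro hv
      obtain ⟨h1, h2⟩ := (mem_rootSet_iff k hk v).mp hv
      obtain ⟨s, i, j, hij, hveq⟩ := exists_param v h1 h2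
      exact ⟨(s, i, j), hij, hveq.symm⟩
    · rintro ⟨⟨s, i, j⟩, hij, rfl⟩
      exact (mem_rootSet_iff k hk _).mpr (rt_cond (k + 4) s i j hij)
  rw [hset, Set.ncard_coe_finset]
  rw [Finset.card_image_of_injOn]
  · rw [Finset.card_product, Finset.card_univ, Fintype.card_bool, Finset.offDiag_card,
      Finset.card_univ, Fintype.card_fin]
    have e : (k + 4) * (k + 4) - (k + 4) = (k + 4) * (k + 3) := by
      have : (k + 4) * (k + 3) + (k + 4) = (k + 4) * (k + 4) := by ring
      omega
    rw [e]; ring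
  · rintro ⟨s, i, j⟩ hp ⟨s', i', j'⟩ hq heq
    simp only [Finset.mem_coe, Finset.mem_product, Finset.mem_offDiag, Finset.mem_univ,
      true_and] at hp hq
    obtain ⟨h1, h2, h3⟩ := rt_inj hp hq heq
    exact Prod.ext h1 (Prod.ext h2 h3)
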